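/- Let Ω be a nonempty finite set equipped with the uniform probability measure P and expectation E. Let n, n⁰ : Ω → ℝ≥0, T : Ω → [0,∞], G : Ω → ℝ with finite range, A : Ω → {app, no app}, ξ ∈ [0,1], and fix τ ∈ [0,∞). Assume (i) for every g, a with P(G = g, A = a) > 0 and every ρ with P(T = ρ, G = g, A = a) > 0, E(n | T = ρ, G = g, A = a) = (1 − ξ·1_{ρ ≤ τ})·E(n⁰ | T = ρ, G = g, A = a); (ii) n⁰ and T are conditionally independent given the pair (G, A); and (iii) A is independent of the pair (G, n⁰) under P. Then for every g, a with P(G = g, A = a) > 0, E(n | G = g, A = a) = E(n⁰ | G = g)·(1 − ξ·P(T ≤ τ | G = g, A = a)). -/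

import Mathlib

open Finset
open scoped Classical ENNReal NNReal

noncomputable section

variable {Ω : Type*} [Fintype Ω]

/-- Number of elements of `Ω` satisfying `E`, as a real number. -/
def cnt (E : Ω → Prop) : ℝ := ((Finset.univ.filter E).card : ℝ)

/-- The uniform (counting) probability of the event `E`. -/
def pr (E : Ω → Prop) : ℝ := cnt E / (Fintype.card Ω : ℝ)

/-- The conditional probability of the event `E` given the event `C`
(junk value `0` if `C` is empty). -/
def prC (C E : Ω → Prop) : ℝ := cnt (fun ω => C ω ∧ E ω) / cnt C

/-- The expectation of `X` under the uniform probability measure. -/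
def expec (X : Ω → ℝ) : ℝ := (∑ ω, X ω) / (Fintype.card Ω : ℝ)

/-- The conditional expectation of `X` given the event `C`, i.e. the average of `X`
over `C` (junk value `0` if `C` is empty). -/
def expecC (C : Ω → Prop) (X : Ω → ℝ) : ℝ :=
  (∑ ω ∈ Finset.univ.filter C, X ω) / cnt C

end

/-- Whether or not an individual uses the contact-tracing app. -/
inductive AppUse : Type
  | app : AppUse
  | noapp : AppUse
  deriving DecidableEq

instance : Fintype AppUse :=
  ⟨{AppUse.app, AppUse.noapp}, fun x => by cases x <;> simp⟩


section aux

variable {Ω : Type*} [Fintype Ω]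

/-- The sum of `X` over the event `P` (with a canonical choice of decidability
instance, to avoid instance mismatches). -/
noncomputable def csum (P : Ω → Prop) (X : Ω → ℝ) : ℝ := ∑ ω ∈ univ.filter P, X ω

lemma cnt_eq_card {P : Ω → Prop} (inst : DecidablePred P) :
    cnt P = (((@Finset.filter Ω P inst univ).card : ℕ) : ℝ) := by
  unfold cnt
  congr 1
  exact congrArg Finset.card
    (@Finset.filter_congr _ P P (fun a => Classical.propDecidable (P a)) inst _
      (fun _ _ => Iff.rfl))

lemma sum_eq_csum {P : Ω → Prop} (inst : DecidablePred P) (X : Ω → ℝ) :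
    ∑ ω ∈ @Finset.filter Ω P inst univ, X ω = csum P X := by
  unfold csum
  congr 1
  exact @Finset.filter_congr _ P P inst (fun a => Classical.propDecidable (P a)) _
    (fun _ _ => Iff.rfl)

lemma cnt_nonneg (P : Ω → Prop) : 0 ≤ cnt P := Nat.cast_nonneg _

lemma cnt_congr {P Q : Ω → Prop} (h : ∀ ω, P ω ↔ Q ω) : cnt P = cnt Q := by
  have h2 : univ.filter P = univ.filter Q := Finset.filter_congr fun ω _ => h ω
  unfold cnt
  rw [h2]

lemma csum_congr {P Q : Ω → Prop} (h : ∀ ω, P ω ↔ Q ω) (X : Ω → ℝ) :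
    csum P X = csum Q X := by
  unfold csum
  congr 1
  exact Finset.filter_congr fun ω _ => h ω

lemma cnt_eq_zero_of {P : Ω → Prop} (h : ∀ ω, ¬ P ω) : cnt P = 0 := by
  simp [cnt, Finset.filter_eq_empty_iff, h]

lemma csum_zero_of_cnt_zero {P : Ω → Prop} (h : cnt P = 0) (X : Ω → ℝ) :
    csum P X = 0 := by
  have h' : ((univ.filter P).card : ℝ) = 0 := h
  have : (univ.filter P).card = 0 := by exact_mod_cast h'
  unfold csum
  rw [Finset.card_eq_zero.mp this]
  simp

lemma csum_one (P : Ω → Prop) : csum P (fun _ => (1:ℝ)) = cnt P := by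
  unfold csum
  rw [Finset.sum_const, nsmul_eq_mul, mul_one, ← cnt_eq_card _]

lemma csum_val_of (Q : Ω → Prop) (f : Ω → ℝ≥0) (y : ℝ≥0) (h : ∀ ω, Q ω → f ω = y) :
    csum Q (fun ω => (f ω : ℝ)) = (y : ℝ) * cnt Q := by
  unfold csum
  have hval : ∀ ω ∈ univ.filter Q, ((f ω : ℝ)) = (y : ℝ) := by
    intro ω hω
    have := h ω (Finset.mem_filter.mp hω).2
    simp [this]
  rw [Finset.sum_congr rfl hval, Finset.sum_const, nsmul_eq_mul, mul_comm, ← cnt_eq_card _]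

lemma fiber_csum {β : Type*} [DecidableEq β] (P : Ω → Prop) (f : Ω → β) (X : Ω → ℝ) :
    csum P X = ∑ b ∈ univ.image f, csum (fun ω => P ω ∧ f ω = b) X := by
  rw [show csum P X = ∑ ω ∈ univ.filter P, X ω from rfl,
    ← Finset.sum_fiberwise_of_maps_to (fun x _ => mem_image_of_mem f (mem_univ x)) X]
  refine Finset.sum_congr rfl fun b _ => ?_
  rw [Finset.filter_filter]
  exact sum_eq_csum _ X

lemma cnt_fiber {β : Type*} [DecidableEq β] (P : Ω → Prop) (f : Ω → β) :
    cnt P = ∑ b ∈ univ.image f, cnt (fun ω => P ω ∧ f ω = b) := by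
  rw [← csum_one P, fiber_csum P f]
  exact Finset.sum_congr rfl fun b _ => csum_one _

lemma csum_val_fiber (P : Ω → Prop) (f : Ω → ℝ≥0) :
    csum P (fun ω => (f ω : ℝ))
      = ∑ y ∈ univ.image f, (y : ℝ) * cnt (fun ω => P ω ∧ f ω = y) := by
  rw [fiber_csum P f]
  exact Finset.sum_congr rfl fun y _ => csum_val_of _ f y (fun ω hω => hω.2)

lemma cnt_pos_of_pr_pos {P : Ω → Prop} (h : 0 < pr P) : 0 < cnt P := by
  by_contra hle
  push_neg at hle
  have h0 : cnt P = 0 := le_antisymm hle (cnt_nonneg P)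
  simp [pr, h0] at h

lemma pr_pos_of_cnt_pos [Nonempty Ω] {P : Ω → Prop} (h : 0 < cnt P) : 0 < pr P := by
  have hN : (0:ℝ) < (Fintype.card Ω : ℝ) := by exact_mod_cast Fintype.card_pos
  exact div_pos h hN

lemma expecC_eq_csum (C : Ω → Prop) (X : Ω → ℝ) : expecC C X = csum C X / cnt C := rfl

lemma prC_eq (C E : Ω → Prop) : prC C E = cnt (fun ω => C ω ∧ E ω) / cnt C := rfl

end aux

/-- suppression formula refined by app usage.  `Ω` nonempty finite
with the uniform measure; `n, n⁰ : Ω → ℝ≥0`, testing time `T : Ω → [0,∞]`, severity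
`G : Ω → ℝ`, app usage `A : Ω → {app, no app}`, `ξ ∈ [0,1]`, `τ ∈ [0,∞)`.  Under
(i) the suppression hypothesis by severity and app usage, (ii) conditional
independence of `n⁰` and `T` given `(G, A)`, and (iii) independence of `A` from
`(G, n⁰)`, for every `g, a` with `P(G = g, A = a) > 0`:
`E(n | G = g, A = a) = E(n⁰ | G = g)·(1 − ξ·P(T ≤ τ | G = g, A = a))`. -/
theorem statement_13 {Ω : Type*} [Fintype Ω] [Nonempty Ω]
    (n n0 : Ω → ℝ≥0) (T : Ω → ℝ≥0∞) (G : Ω → ℝ) (A : Ω → AppUse)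
    (ξ : ℝ) (hξ0 : 0 ≤ ξ) (hξ1 : ξ ≤ 1) (τ : ℝ≥0)
    (hsup : ∀ (g : ℝ) (a : AppUse), 0 < pr (fun ω => G ω = g ∧ A ω = a) →
      ∀ ρ : ℝ≥0∞, 0 < pr (fun ω => T ω = ρ ∧ G ω = g ∧ A ω = a) →
        expecC (fun ω => T ω = ρ ∧ G ω = g ∧ A ω = a) (fun ω => (n ω : ℝ)) =
          (1 - ξ * (if ρ ≤ (τ : ℝ≥0∞) then (1 : ℝ) else 0)) *
            expecC (fun ω => T ω = ρ ∧ G ω = g ∧ A ω = a) (fun ω => (n0 ω : ℝ)))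
    (hci : ∀ (g : ℝ) (a : AppUse), 0 < pr (fun ω => G ω = g ∧ A ω = a) →
      ∀ (y : ℝ≥0) (ρ : ℝ≥0∞),
        prC (fun ω => G ω = g ∧ A ω = a) (fun ω => n0 ω = y ∧ T ω = ρ) =
          prC (fun ω => G ω = g ∧ A ω = a) (fun ω => n0 ω = y) *
            prC (fun ω => G ω = g ∧ A ω = a) (fun ω => T ω = ρ))
    (hA : ∀ (a : AppUse) (g : ℝ) (y : ℝ≥0),
      pr (fun ω => A ω = a ∧ G ω = g ∧ n0 ω = y) =
        pr (fun ω => A ω = a) * pr (fun ω => G ω = g ∧ n0 ω = y)) :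
    ∀ (g : ℝ) (a : AppUse), 0 < pr (fun ω => G ω = g ∧ A ω = a) →
      expecC (fun ω => G ω = g ∧ A ω = a) (fun ω => (n ω : ℝ)) =
        expecC (fun ω => G ω = g) (fun ω => (n0 ω : ℝ)) *
          (1 - ξ * prC (fun ω => G ω = g ∧ A ω = a) (fun ω => T ω ≤ (τ : ℝ≥0∞))) := by
  intro g a hpos
  have hN : (0:ℝ) < (Fintype.card Ω : ℝ) := by exact_mod_cast Fintype.card_pos
  have hNne : (Fintype.card Ω : ℝ) ≠ 0 := ne_of_gt hN
  have hCpos : 0 < cnt (fun ω => G ω = g ∧ A ω = a) := cnt_pos_of_pr_pos hpos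
  have hCne : cnt (fun ω => G ω = g ∧ A ω = a) ≠ 0 := ne_of_gt hCpos
  set S0 : ℝ := csum (fun ω => G ω = g ∧ A ω = a) (fun ω => (n0 ω : ℝ)) with hS0def
  -- Key 1: conditional independence implies E(n0 | T = ρ, C) "=" E(n0 | C), in product form
  have key1 : ∀ ρ : ℝ≥0∞,
      csum (fun ω => T ω = ρ ∧ G ω = g ∧ A ω = a) (fun ω => (n0 ω : ℝ))
        = S0 * cnt (fun ω => T ω = ρ ∧ G ω = g ∧ A ω = a)
            / cnt (fun ω => G ω = g ∧ A ω = a) := by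
    intro ρ
    have hcntT : ∀ y : ℝ≥0,
        cnt (fun ω => (T ω = ρ ∧ G ω = g ∧ A ω = a) ∧ n0 ω = y)
          = cnt (fun ω => (G ω = g ∧ A ω = a) ∧ n0 ω = y)
              * cnt (fun ω => T ω = ρ ∧ G ω = g ∧ A ω = a)
              / cnt (fun ω => G ω = g ∧ A ω = a) := by
      intro y
      have h : cnt (fun ω => (G ω = g ∧ A ω = a) ∧ n0 ω = y ∧ T ω = ρ)
            / cnt (fun ω => G ω = g ∧ A ω = a)
          = (cnt (fun ω => (G ω = g ∧ A ω = a) ∧ n0 ω = y)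
              / cnt (fun ω => G ω = g ∧ A ω = a))
            * (cnt (fun ω => (G ω = g ∧ A ω = a) ∧ T ω = ρ)
              / cnt (fun ω => G ω = g ∧ A ω = a)) := hci g a hpos y ρ
      have e1 : cnt (fun ω => (T ω = ρ ∧ G ω = g ∧ A ω = a) ∧ n0 ω = y)
          = cnt (fun ω => (G ω = g ∧ A ω = a) ∧ n0 ω = y ∧ T ω = ρ) :=
        cnt_congr (by tauto)
      have e2 : cnt (fun ω => (G ω = g ∧ A ω = a) ∧ T ω = ρ)
          = cnt (fun ω => T ω = ρ ∧ G ω = g ∧ A ω = a) :=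
        cnt_congr (by tauto)
      rw [e2] at h
      rw [e1, eq_div_iff hCne]
      field_simp [hCne] at h
      exact mul_right_cancel₀ hCne (by linear_combination (cnt (fun ω => G ω = g ∧ A ω = a)) * h)
    rw [csum_val_fiber (fun ω => T ω = ρ ∧ G ω = g ∧ A ω = a) n0,
        hS0def, csum_val_fiber (fun ω => G ω = g ∧ A ω = a) n0,
        Finset.sum_mul, Finset.sum_div]
    refine Finset.sum_congr rfl fun y _ => ?_
    rw [hcntT y]
    ring
  -- Key 2: the suppression hypothesis, in summed form, valid for every ρ
  have key2 : ∀ ρ : ℝ≥0∞,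
      csum (fun ω => T ω = ρ ∧ G ω = g ∧ A ω = a) (fun ω => (n ω : ℝ))
        = (1 - ξ * (if ρ ≤ (τ : ℝ≥0∞) then (1:ℝ) else 0)) * S0
            * cnt (fun ω => T ω = ρ ∧ G ω = g ∧ A ω = a)
            / cnt (fun ω => G ω = g ∧ A ω = a) := by
    intro ρ
    by_cases hD : cnt (fun ω => T ω = ρ ∧ G ω = g ∧ A ω = a) = 0
    · rw [csum_zero_of_cnt_zero hD, hD]
      ring
    · have hDpos : 0 < cnt (fun ω => T ω = ρ ∧ G ω = g ∧ A ω = a) :=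
        lt_of_le_of_ne (cnt_nonneg _) (Ne.symm hD)
      have h := hsup g a hpos ρ (pr_pos_of_cnt_pos hDpos)
      rw [expecC_eq_csum, expecC_eq_csum, key1 ρ] at h
      rw [div_eq_iff hD] at h
      rw [h]
      field_simp
  -- Partition the C-sum of n over the values of T
  have hfib : csum (fun ω => G ω = g ∧ A ω = a) (fun ω => (n ω : ℝ))
      = ∑ ρ ∈ univ.image T,
          (1 - ξ * (if ρ ≤ (τ : ℝ≥0∞) then (1:ℝ) else 0)) * S0
            * cnt (fun ω => T ω = ρ ∧ G ω = g ∧ A ω = a)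
            / cnt (fun ω => G ω = g ∧ A ω = a) := by
    rw [fiber_csum (fun ω => G ω = g ∧ A ω = a) T (fun ω => (n ω : ℝ))]
    refine Finset.sum_congr rfl fun ρ _ => ?_
    rw [csum_congr (P := fun ω => (G ω = g ∧ A ω = a) ∧ T ω = ρ)
        (Q := fun ω => T ω = ρ ∧ G ω = g ∧ A ω = a) (by tauto) (fun ω => (n ω : ℝ))]
    exact key2 ρ
  -- (a) total count
  have hha : ∑ ρ ∈ univ.image T, cnt (fun ω => T ω = ρ ∧ G ω = g ∧ A ω = a)
      = cnt (fun ω => G ω = g ∧ A ω = a) := by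
    rw [cnt_fiber (fun ω => G ω = g ∧ A ω = a) T]
    exact Finset.sum_congr rfl fun ρ _ => (cnt_congr (by tauto)).symm
  -- (b) count below threshold
  have hhb : ∑ ρ ∈ univ.image T,
        (if ρ ≤ (τ : ℝ≥0∞) then (1:ℝ) else 0) * cnt (fun ω => T ω = ρ ∧ G ω = g ∧ A ω = a)
      = cnt (fun ω => (G ω = g ∧ A ω = a) ∧ T ω ≤ (τ : ℝ≥0∞)) := by
    rw [cnt_fiber (fun ω => (G ω = g ∧ A ω = a) ∧ T ω ≤ (τ : ℝ≥0∞)) T]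
    refine Finset.sum_congr rfl fun ρ _ => ?_
    by_cases hρ : ρ ≤ (τ : ℝ≥0∞)
    · rw [if_pos hρ, one_mul]
      refine cnt_congr fun ω => ?_
      constructor
      · rintro ⟨ht, hc⟩; exact ⟨⟨hc, ht ▸ hρ⟩, ht⟩
      · rintro ⟨⟨hc, _⟩, ht⟩; exact ⟨ht, hc⟩
    · rw [if_neg hρ, zero_mul]
      refine (cnt_eq_zero_of fun ω hω => ?_).symm
      exact hρ (hω.2 ▸ hω.1.2)
  -- assemble the C-sum of n
  have hSn : csum (fun ω => G ω = g ∧ A ω = a) (fun ω => (n ω : ℝ))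
      = S0 / cnt (fun ω => G ω = g ∧ A ω = a)
          * (cnt (fun ω => G ω = g ∧ A ω = a)
              - ξ * cnt (fun ω => (G ω = g ∧ A ω = a) ∧ T ω ≤ (τ : ℝ≥0∞))) := by
    rw [hfib]
    have hterm : ∀ ρ ∈ univ.image T,
        (1 - ξ * (if ρ ≤ (τ : ℝ≥0∞) then (1:ℝ) else 0)) * S0
            * cnt (fun ω => T ω = ρ ∧ G ω = g ∧ A ω = a)
            / cnt (fun ω => G ω = g ∧ A ω = a)
        = S0 / cnt (fun ω => G ω = g ∧ A ω = a)
            * cnt (fun ω => T ω = ρ ∧ G ω = g ∧ A ω = a)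
          - ξ * (S0 / cnt (fun ω => G ω = g ∧ A ω = a))
            * ((if ρ ≤ (τ : ℝ≥0∞) then (1:ℝ) else 0)
                * cnt (fun ω => T ω = ρ ∧ G ω = g ∧ A ω = a)) := by
      intro ρ _
      by_cases hρ : ρ ≤ (τ : ℝ≥0∞)
      · rw [if_pos hρ]
        field_simp
      · rw [if_neg hρ]
        field_simp
    rw [Finset.sum_congr rfl hterm, Finset.sum_sub_distrib, ← Finset.mul_sum, hha,
        ← Finset.mul_sum, hhb]
    ring
  -- Step 3: independence of A from (G, n0) gives E(n0 | C) = E(n0 | G = g)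
  have haA : ∀ y : ℝ≥0,
      cnt (fun ω => (G ω = g ∧ A ω = a) ∧ n0 ω = y)
        = cnt (fun ω => A ω = a) * cnt (fun ω => G ω = g ∧ n0 ω = y)
            / (Fintype.card Ω : ℝ) := by
    intro y
    have h : cnt (fun ω => A ω = a ∧ G ω = g ∧ n0 ω = y) / (Fintype.card Ω : ℝ)
        = cnt (fun ω => A ω = a) / (Fintype.card Ω : ℝ)
          * (cnt (fun ω => G ω = g ∧ n0 ω = y) / (Fintype.card Ω : ℝ)) := hA a g y
    have e1 : cnt (fun ω => (G ω = g ∧ A ω = a) ∧ n0 ω = y)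
        = cnt (fun ω => A ω = a ∧ G ω = g ∧ n0 ω = y) := cnt_congr (by tauto)
    rw [e1, eq_div_iff hNne]
    field_simp [hNne] at h
    exact mul_right_cancel₀ hNne (by linear_combination (Fintype.card Ω : ℝ) * h)
  have hS0' : S0 = cnt (fun ω => A ω = a) / (Fintype.card Ω : ℝ)
      * csum (fun ω => G ω = g) (fun ω => (n0 ω : ℝ)) := by
    rw [hS0def, csum_val_fiber (fun ω => G ω = g ∧ A ω = a) n0,
        csum_val_fiber (fun ω => G ω = g) n0, Finset.mul_sum]
    refine Finset.sum_congr rfl fun y _ => ?_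
    rw [haA y]
    ring
  have hC' : cnt (fun ω => G ω = g ∧ A ω = a)
      = cnt (fun ω => A ω = a) / (Fintype.card Ω : ℝ) * cnt (fun ω => G ω = g) := by
    rw [cnt_fiber (fun ω => G ω = g ∧ A ω = a) n0,
        cnt_fiber (fun ω => G ω = g) n0, Finset.mul_sum]
    refine Finset.sum_congr rfl fun y _ => ?_
    rw [haA y]
    ring
  have hkpos : 0 < cnt (fun ω => A ω = a) / (Fintype.card Ω : ℝ) := by
    rcases lt_or_eq_of_le (div_nonneg (cnt_nonneg (fun ω => A ω = a)) (le_of_lt hN)) with hk | hk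
    · exact hk
    · exfalso; rw [hC', ← hk, zero_mul] at hCpos; exact lt_irrefl 0 hCpos
  have hGpos : 0 < cnt (fun ω => G ω = g) := by
    rcases lt_or_eq_of_le (cnt_nonneg (fun ω => G ω = g)) with hk | hk
    · exact hk
    · exfalso; rw [hC', ← hk, mul_zero] at hCpos; exact lt_irrefl 0 hCpos
  have hstep3 : S0 / cnt (fun ω => G ω = g ∧ A ω = a)
      = csum (fun ω => G ω = g) (fun ω => (n0 ω : ℝ)) / cnt (fun ω => G ω = g) := by
    rw [hS0', hC', mul_div_mul_left _ _ (ne_of_gt hkpos)]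
  -- Conclusion
  rw [expecC_eq_csum, expecC_eq_csum, prC_eq, hSn, hstep3]
  field_simp
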